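/- The set G = {M(r;a,b) : r ∈ F^*, a, b ∈ F} is a subgroup of GL(4,F): it is closed under matrix multiplication, every M(r;a,b) is invertible with its inverse again of the form M(r';a',b'), and G has exactly q^2·(q−1) elements. -/

import Mathlib

open Matrix

noncomputable section

abbrev F (n : ℕ) : Type := GaloisField 2 (2 * n + 1)

def om (n : ℕ) : ℕ := 2 ^ (n + 1)

def ff (n : ℕ) (x y : F n) : F n := x ^ (om n + 2) + x * y + y ^ om n

def Mmat (n : ℕ) (r a b : F n) : Matrix (Fin 4) (Fin 4) (F n) :=
  !![1, ff n a b, a, b;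
     0, r ^ (om n + 2), 0, 0;
     0, (a ^ (om n + 1) + b) * r, r, a ^ om n * r;
     0, a * r ^ (om n + 1), 0, r ^ (om n + 1)]

/-- The set `G = {M(r;a,b) : r ∈ F^*, a b ∈ F}`. -/
def Gset (n : ℕ) : Set (Matrix (Fin 4) (Fin 4) (F n)) :=
  {A | ∃ r a b : F n, r ≠ 0 ∧ A = Mmat n r a b}

lemma frob_add (n : ℕ) (x y : F n) : (x+y)^om n = x^om n + y^om n := by
  rw [om]; exact add_pow_char_pow ..

lemma frob_frob (n : ℕ) (x : F n) : (x ^ om n)^om n = x^2 := by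
  letI : Fintype (F n) := Fintype.ofFinite _
  have hc : Fintype.card (F n) = 2^(2*n+1) := by
    rw [← Nat.card_eq_fintype_card]; exact GaloisField.card 2 _ (by omega)
  have h : om n * om n = 2^(2*n+1) * 2 := by
    rw [om, ← pow_add, ← pow_succ]; congr 1; ring
  rw [← pow_mul, h, pow_mul, hc.symm, FiniteField.pow_card]

lemma two_eq_zero' (n : ℕ) : (2 : F n) = 0 := by
  have := CharP.cast_eq_zero (F n) 2
  exact_mod_cast this

lemma char_two_add_self (n : ℕ) (x : F n) : x + x = 0 := by
  have h2 := two_eq_zero' n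
  linear_combination x * h2

lemma Mmat_mul (n : ℕ) (r a b s c d : F n) :
    Mmat n r a b * Mmat n s c d
      = Mmat n (r*s) (a*s+c) (d + a*c^om n*s + b*s^(om n+1)) := by
  have h2 := two_eq_zero' n
  ext i j
  fin_cases i <;> fin_cases j <;>
    simp [Mmat, mul_apply, ff, Fin.sum_univ_four, pow_add, pow_one, frob_add,
      mul_pow, frob_frob, Matrix.vecHead, Matrix.vecTail, Function.comp]
  any_goals ring
  · linear_combination (-(c*(c^om n)*a*s + c*a*(a^om n)*s*(s^om n) + c^2*(a^om n)*(s^om n) + (c^om n)*a^2*s^2)) * h2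
  · linear_combination (-(a*r*s^2*(c^om n))) * h2

lemma Mmat_one (n : ℕ) : Mmat n 1 0 0 = 1 := by
  have hom : om n ≠ 0 := by simp [om]
  ext i j
  fin_cases i <;> fin_cases j <;>
    simp [Mmat, ff, Matrix.one_apply, zero_pow hom, zero_pow (by omega : om n + 2 ≠ 0),
      Matrix.vecHead, Matrix.vecTail, Function.comp]

lemma Mmat_inv_params (n : ℕ) (r a b : F n) (hr : r ≠ 0) :
    Mmat n r a b * Mmat n r⁻¹ (a*r⁻¹) (a*(a*r⁻¹)^om n*r⁻¹ + b*(r⁻¹)^(om n+1)) = 1 ∧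
    Mmat n r⁻¹ (a*r⁻¹) (a*(a*r⁻¹)^om n*r⁻¹ + b*(r⁻¹)^(om n+1)) * Mmat n r a b = 1 := by
  have h2 := two_eq_zero' n
  have hrr : r * r⁻¹ = 1 := mul_inv_cancel₀ hr
  have hrw : r^(om n+1) ≠ 0 := pow_ne_zero _ hr
  constructor
  · rw [Mmat_mul]
    rw [show r * r⁻¹ = 1 from hrr,
        show a * r⁻¹ + a * r⁻¹ = 0 from char_two_add_self n _,
        show (a*(a*r⁻¹)^om n*r⁻¹ + b*(r⁻¹)^(om n+1)) + a*(a*r⁻¹)^om n*r⁻¹ + b*(r⁻¹)^(om n+1) = 0 by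
          linear_combination (a*(a*r⁻¹)^om n*r⁻¹ + b*(r⁻¹)^(om n+1)) * h2]
    exact Mmat_one n
  · rw [Mmat_mul]
    have e1 : r⁻¹ * r = 1 := inv_mul_cancel₀ hr
    have e2 : a * r⁻¹ * r + a = 0 := by
      rw [mul_assoc, inv_mul_cancel₀ hr, mul_one]; exact char_two_add_self n a
    have e3 : b + (a*r⁻¹) * a^om n * r + (a*(a*r⁻¹)^om n*r⁻¹ + b*(r⁻¹)^(om n+1)) * r^(om n+1) = 0 := by
      have hro : r^om n ≠ 0 := pow_ne_zero _ hr
      have hi : r⁻¹ ^ om n * r ^ om n = 1 := by rw [← mul_pow, inv_mul_cancel₀ hr, one_pow]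
      linear_combination (a*a^om n + (a*a^om n + b)*(r⁻¹ ^ om n * r ^ om n)) * e1 + (a*a^om n + b) * hi + (b + a*a^om n) * h2
    rw [e1, e2, e3]
    exact Mmat_one n

theorem Gset_subgroup (n : ℕ) (hn : 1 ≤ n) :
    (∀ A ∈ Gset n, ∀ B ∈ Gset n, A * B ∈ Gset n) ∧
    (∀ r : F n, r ≠ 0 → ∀ a b : F n, IsUnit (Mmat n r a b) ∧
      ∃ r' a' b' : F n, r' ≠ 0 ∧ Mmat n r a b * Mmat n r' a' b' = 1 ∧
        Mmat n r' a' b' * Mmat n r a b = 1) ∧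
    Nat.card (Gset n) = (2 ^ (2 * n + 1)) ^ 2 * (2 ^ (2 * n + 1) - 1) := by
  refine ⟨?_, ?_, ?_⟩
  · rintro A ⟨r, a, b, hr, rfl⟩ B ⟨s, c, d, hs, rfl⟩
    exact ⟨r*s, a*s+c, d + a*c^om n*s + b*s^(om n+1), mul_ne_zero hr hs, Mmat_mul ..⟩
  · intro r hr a b
    obtain ⟨h1, h2⟩ := Mmat_inv_params n r a b hr
    refine ⟨⟨⟨_, _, h1, h2⟩, rfl⟩, r⁻¹, a*r⁻¹, _, inv_ne_zero hr, h1, h2⟩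
  · have hg : Gset n = Set.range (fun p : (F n)ˣ × F n × F n => Mmat n p.1 p.2.1 p.2.2) := by
      ext A
      constructor
      · rintro ⟨r, a, b, hr, rfl⟩
        exact ⟨(Units.mk0 r hr, a, b), rfl⟩
      · rintro ⟨⟨u, a, b⟩, rfl⟩
        exact ⟨u, a, b, u.ne_zero, rfl⟩
    have hinj : Function.Injective (fun p : (F n)ˣ × F n × F n => Mmat n p.1 p.2.1 p.2.2) := by
      rintro ⟨u, a, b⟩ ⟨v, c, d⟩ h
      simp only at h
      have h22 := congrFun (congrFun h 2) 2
      have h02 := congrFun (congrFun h 0) 2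
      have h03 := congrFun (congrFun h 0) 3
      simp [Mmat] at h22 h02 h03
      ext <;> simp [h22, h02, h03]
    rw [hg, Nat.card_range_of_injective hinj]
    letI : Fintype (F n) := Fintype.ofFinite _
    have hcF : Nat.card (F n) = 2^(2*n+1) := GaloisField.card 2 _ (by omega)
    have hcU : Nat.card ((F n)ˣ) = 2^(2*n+1) - 1 := by
      rw [Nat.card_units, hcF]
    rw [Nat.card_prod, Nat.card_prod, hcF, hcU]
    ring
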